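/- Suppose a β-smooth function L satisfies the μ-PL* condition and one gradient step is taken with an inexact gradient g = ∇L(θ) + e where ‖e‖ ≤ ρ and ‖∇L(θ)‖ ≤ ∇_max. Then with step size η ≤ 1/β, L(θ − ηg) ≤ (1 − ημ)L(θ) + (η/2)(ρ² + 2ρ∇_max). -/

import Mathlib

open scoped BigOperators

set_option maxHeartbeats 800000

open intervalIntegral

lemma descent_lemma {d : ℕ} (L : EuclideanSpace ℝ (Fin d) → ℝ) (β : ℝ) (hβ : 0 < β)
    (hdiff : Differentiable ℝ L)
    (hsmooth : ∀ x y, ‖gradient L x - gradient L y‖ ≤ β * ‖x - y‖)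
    (x v : EuclideanSpace ℝ (Fin d)) :
    L (x + v) ≤ L x + inner ℝ (gradient L x) v + β / 2 * ‖v‖ ^ 2 := by
  set G : EuclideanSpace ℝ (Fin d) → EuclideanSpace ℝ (Fin d) := gradient L with hG
  have hGcont : Continuous G := by
    apply (LipschitzWith.of_dist_le_mul (K := β.toNNReal) ?_).continuous
    intro a b
    simpa [dist_eq_norm, Real.coe_toNNReal β hβ.le] using hsmooth a b
  have hline : ∀ t : ℝ, HasDerivAt (fun t : ℝ => x + t • v) v t := by
    intro t
    simpa using ((hasDerivAt_id t).smul_const v).const_add x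
  have hφ : ∀ t : ℝ, HasDerivAt (fun t : ℝ => L (x + t • v))
      (inner ℝ (G (x + t • v)) v : ℝ) t := by
    intro t
    have hF : HasFDerivAt L (InnerProductSpace.toDual ℝ _ (G (x + t • v))) (x + t • v) :=
      ((hdiff (x + t • v)).hasGradientAt).hasFDerivAt
    have h := hF.comp_hasDerivAt t (hline t); simp at h; exact h
  have hcont : Continuous (fun t : ℝ => (inner ℝ (G (x + t • v)) v : ℝ)) := by
    exact (hGcont.comp (continuous_const.add (continuous_id.smul continuous_const))).inner continuous_const
  have hint : ∫ t in (0:ℝ)..1, (inner ℝ (G (x + t • v)) v : ℝ) = L (x + v) - L x := by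
    have := intervalIntegral.integral_eq_sub_of_hasDerivAt
      (f := fun t : ℝ => L (x + t • v)) (f' := fun t : ℝ => (inner ℝ (G (x + t • v)) v : ℝ))
      (a := 0) (b := 1) (fun t _ => hφ t) (hcont.intervalIntegrable 0 1)
    simpa using this
  have hbound : ∀ t ∈ Set.Icc (0:ℝ) 1,
      (inner ℝ (G (x + t • v)) v : ℝ) ≤ inner ℝ (G x) v + β * t * ‖v‖ ^ 2 := by
    intro t ht
    have h1 : (inner ℝ (G (x + t • v)) v : ℝ) - inner ℝ (G x) v = inner ℝ (G (x + t • v) - G x) v := by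
      rw [inner_sub_left]
    have h2 : (inner ℝ (G (x + t • v) - G x) v : ℝ) ≤ ‖G (x + t • v) - G x‖ * ‖v‖ :=
      real_inner_le_norm _ _
    have h3 : ‖G (x + t • v) - G x‖ ≤ β * (t * ‖v‖) := by
      have := hsmooth (x + t • v) x
      simpa [norm_smul, abs_of_nonneg ht.1, mul_assoc] using this
    nlinarith [norm_nonneg v, norm_nonneg (G (x + t • v) - G x), ht.1, sq_nonneg ‖v‖]
  have hmono : ∫ t in (0:ℝ)..1, (inner ℝ (G (x + t • v)) v : ℝ) ≤
      ∫ t in (0:ℝ)..1, (inner ℝ (G x) v + β * t * ‖v‖ ^ 2) := by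
    apply intervalIntegral.integral_mono_on (by norm_num)
      (hcont.intervalIntegrable 0 1)
      ((continuous_const.add ((continuous_const.mul continuous_id).mul continuous_const)).intervalIntegrable 0 1)
    exact hbound
  have hval : ∫ t in (0:ℝ)..1, ((inner ℝ (G x) v : ℝ) + β * t * ‖v‖ ^ 2)
      = inner ℝ (G x) v + β / 2 * ‖v‖ ^ 2 := by
    have hfun : (fun t : ℝ => (inner ℝ (G x) v : ℝ) + β * t * ‖v‖ ^ 2)
        = fun t : ℝ => (inner ℝ (G x) v : ℝ) + (β * ‖v‖ ^ 2) * t := by ext t; ring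
    rw [hfun, intervalIntegral.integral_add (g := fun t : ℝ => β * ‖v‖ ^ 2 * t) intervalIntegrable_const
      ((continuous_const.mul continuous_id').intervalIntegrable 0 1 :
        IntervalIntegrable (fun t : ℝ => β * ‖v‖ ^ 2 * t) MeasureTheory.volume 0 1),
      intervalIntegral.integral_const_mul, integral_id,
      integral_const]
    simp; ring
  rw [hint, hval] at hmono
  linarith

/-- One inexact gradient step on a nonnegative `β`-smooth `μ`-PL* function:
`L(θ - ηg) ≤ (1 - ημ) L(θ) + (η/2)(ρ² + 2ρ∇max)` when `g = ∇L(θ) + e`, `‖e‖ ≤ ρ`. -/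
theorem inexact_gradient_step_bound
    {d : ℕ} (L : EuclideanSpace ℝ (Fin d) → ℝ)
    (μ β η ρ gmax : ℝ)
    (hL0 : ∀ θ, 0 ≤ L θ)
    (hdiff : Differentiable ℝ L)
    (hμ : 0 < μ) (hβ : 0 < β) (hη : 0 < η) (hηβ : η ≤ 1 / β)
    (hρ : 0 ≤ ρ) (hgmax' : 0 ≤ gmax)
    (hsmooth : ∀ x y, ‖gradient L x - gradient L y‖ ≤ β * ‖x - y‖)
    (hPL : ∀ θ, μ * L θ ≤ (1 / 2) * ‖gradient L θ‖ ^ 2)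
    (θ : EuclideanSpace ℝ (Fin d))
    (g e : EuclideanSpace ℝ (Fin d))
    (hg : g = gradient L θ + e)
    (he : ‖e‖ ≤ ρ)
    (hgrad : ‖gradient L θ‖ ≤ gmax) :
    L (θ - η • g) ≤ (1 - η * μ) * L θ + (η / 2) * (ρ ^ 2 + 2 * ρ * gmax) := by
  have hdesc := descent_lemma L β hβ hdiff hsmooth θ (-(η • g))
  have hsub : θ - η • g = θ + -(η • g) := by abel
  rw [← hsub] at hdesc
  set G := gradient L θ with hGdef
  set N := ‖G‖ with hN
  set E := ‖e‖ with hE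
  set I : ℝ := inner ℝ G e with hI
  have hNE : 0 ≤ N := norm_nonneg _
  have hEE : 0 ≤ E := norm_nonneg _
  have hinner : (inner ℝ G (-(η • g)) : ℝ) = -η * (N ^ 2 + I) := by
    rw [hg, inner_neg_right, inner_smul_right, inner_add_right,
      real_inner_self_eq_norm_sq]
    ring
  have hnorm : ‖-(η • g)‖ ^ 2 = η ^ 2 * (N ^ 2 + 2 * I + E ^ 2) := by
    rw [norm_neg, norm_smul, hg, mul_pow]
    rw [show ‖G + e‖ ^ 2 = N ^ 2 + 2 * I + E ^ 2 from by
      rw [norm_add_sq_real]]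
    simp [sq_abs]
  rw [hinner, hnorm] at hdesc
  have hIabs : |I| ≤ N * E := by
    simpa using abs_real_inner_le_norm G e
  have hIub : I ≤ N * E := (abs_le.mp hIabs).2
  have hIlb : -(N * E) ≤ I := (abs_le.mp hIabs).1
  have hβη : β * η ≤ 1 := by
    have h := (le_div_iff₀ hβ).mp hηβ
    nlinarith
  have hPLθ : μ * L θ ≤ (1 / 2) * N ^ 2 := hPL θ
  have hβη2 : β * η ^ 2 ≤ η := by nlinarith
  have hNEρ : N * E ≤ gmax * ρ := mul_le_mul hgrad he hEE hgmax'
  have hI2 : |I| ≤ gmax * ρ := le_trans hIabs hNEρ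
  have habsc : |β * η ^ 2 - η| ≤ η := by
    rw [abs_le]; constructor <;> nlinarith [sq_nonneg η]
  have hc3 : (β * η ^ 2 - η) * I ≤ η * (gmax * ρ) := by
    calc (β * η ^ 2 - η) * I ≤ |(β * η ^ 2 - η) * I| := le_abs_self _
    _ = |β * η ^ 2 - η| * |I| := abs_mul _ _
    _ ≤ η * (gmax * ρ) := mul_le_mul habsc hI2 (abs_nonneg _) hη.le
  have hc1 : β * η ^ 2 * N ^ 2 ≤ η * N ^ 2 :=
    mul_le_mul_of_nonneg_right hβη2 (sq_nonneg N)
  have hc2 : β * η ^ 2 * E ^ 2 ≤ η * ρ ^ 2 := by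
    have hE2 : E ^ 2 ≤ ρ ^ 2 := by nlinarith
    nlinarith [sq_nonneg E]
  have hc4 : η * (μ * L θ) ≤ η * ((1 / 2) * N ^ 2) :=
    mul_le_mul_of_nonneg_left hPLθ hη.le
  nlinarith [hdesc, hc1, hc2, hc3, hc4]
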